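/- Fix integers d ≥ 2 and n ≥ 1, a target position p with 0 ≤ p ≤ n − 1 and a prefix c : Fin p → Fin d. Then for every a ∈ Fin d and every string s ∈ (R1(p,c) ∪ R2(p,c) ∪ R3(p,c)) ∩ S(p,c), the string a •_p s also lies in (R1(p,c) ∪ R2(p,c) ∪ R3(p,c)) ∩ S(p,c). -/
import Mathlib


/-- `R2(p,c)`: strings agreeing with the prefix `c` on coordinates `< p` and
zero on coordinates `> p`. -/
def R2 (d n p : ℕ) (hp : p < n) (c : Fin p → Fin d) : Set (Fin n → Fin d) :=
  {s | (∀ i : Fin p, s (Fin.castLE hp.le i) = c i) ∧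
       ∀ i : Fin n, p < (i : ℕ) → (s i : ℕ) = 0}

/-- `R3(p,c)`: strings whose restriction to coordinates `0,…,p−1` is strictly
lex-greater than `c` (coordinate 0 most significant). -/
def R3 (d n p : ℕ) (hp : p < n) (c : Fin p → Fin d) : Set (Fin n → Fin d) :=
  {s | ∃ q : Fin p, (∀ i : Fin p, (i : ℕ) < (q : ℕ) → s (Fin.castLE hp.le i) = c i) ∧
       (c q : ℕ) < (s (Fin.castLE hp.le q) : ℕ)}

/-- `R1(p,c)`: strings agreeing with `c` up to some `q < p`, strictly smaller
than `c` at `q`, and zero beyond `q`. -/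
def R1 (d n p : ℕ) (hp : p < n) (c : Fin p → Fin d) : Set (Fin n → Fin d) :=
  {s | ∃ q : Fin p, (∀ i : Fin p, (i : ℕ) < (q : ℕ) → s (Fin.castLE hp.le i) = c i) ∧
       (s (Fin.castLE hp.le q) : ℕ) < (c q : ℕ) ∧
       ∀ i : Fin n, (q : ℕ) < (i : ℕ) → (s i : ℕ) = 0}

/-- The control set `S(p,c)`: if the prefix `c` has a nonzero digit, the strings
agreeing with `c` at the last such position; otherwise all strings. -/
def ctrlSet (d n p : ℕ) (hp : p < n) (c : Fin p → Fin d) : Set (Fin n → Fin d) :=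
  {s | ∀ m : Fin p,
    ((c m : ℕ) ≠ 0 ∧ ∀ i : Fin p, (m : ℕ) < (i : ℕ) → (c i : ℕ) = 0) →
      s (Fin.castLE hp.le m) = c m}

/-- Lemma (Sorbit), Appendix A: the set `(R1 ∪ R2 ∪ R3) ∩ S` is invariant under
the mod-`d` action on the target coordinate `p`. -/
theorem Sorbit (d n p : ℕ) (hd : 2 ≤ d) (hn : 1 ≤ n) (hp : p ≤ n - 1)
    (c : Fin p → Fin d) :
    ∀ a : Fin d,
      ∀ s ∈ (R1 d n p (by omega) c ∪ R2 d n p (by omega) c ∪ R3 d n p (by omega) c) ∩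
          ctrlSet d n p (by omega) c,
        Function.update s ⟨p, by omega⟩ (s ⟨p, by omega⟩ + a) ∈
          (R1 d n p (by omega) c ∪ R2 d n p (by omega) c ∪ R3 d n p (by omega) c) ∩
            ctrlSet d n p (by omega) c := by

  intro a s hs
  obtain ⟨hR, hS⟩ := hs
  have hpn : p < n := by omega
  have hupd : ∀ (i : Fin p),
      Function.update s ⟨p, by omega⟩ (s ⟨p, by omega⟩ + a) (Fin.castLE hpn.le i)
        = s (Fin.castLE hpn.le i) := by
    intro i
    apply Function.update_of_ne
    exact Fin.ne_of_val_ne (by simpa using i.isLt.ne)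
  constructor
  · rcases hR with (h1 | h2) | h3
    · -- R1 ∩ S is empty : contradiction
      exfalso
      obtain ⟨q, hq1, hq2, hq3⟩ := h1
      have hcq : (c q : ℕ) ≠ 0 := by omega
      set T := Finset.univ.filter (fun i : Fin p => (c i : ℕ) ≠ 0) with hT
      have hqT : q ∈ T := by simp [hT, hcq]
      have hTne : T.Nonempty := ⟨q, hqT⟩
      set m := T.max' hTne with hm
      have hmT : m ∈ T := T.max'_mem hTne
      have hcm : (c m : ℕ) ≠ 0 := by simpa [hT] using hmT
      have hqm : (q : ℕ) ≤ (m : ℕ) := T.le_max' q hqT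
      have hsm : s (Fin.castLE hpn.le m) = c m := by
        apply hS m
        refine ⟨hcm, fun i hi => ?_⟩
        by_contra hci
        have : (i : ℕ) ≤ (m : ℕ) := T.le_max' i (by simp [hT, hci])
        omega
      rcases eq_or_lt_of_le hqm with heq | hlt
      · have hqm' : q = m := Fin.ext heq
        rw [hqm'] at hq2
        rw [hsm] at hq2
        omega
      · have hz := hq3 (Fin.castLE hpn.le m) (by simpa using hlt)
        rw [hsm] at hz
        omega
    · -- R2 case
      left; right
      refine ⟨fun i => by rw [hupd i]; exact h2.1 i, fun i hi => ?_⟩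
      rw [Function.update_of_ne (Fin.ne_of_val_ne (by simpa using hi.ne'))]
      exact h2.2 i hi
    · -- R3 case
      right
      obtain ⟨q, hq1, hq2⟩ := h3
      exact ⟨q, fun i hi => by rw [hupd i]; exact hq1 i hi, by rw [hupd q]; exact hq2⟩
  · intro m hm
    rw [hupd m]
    exact hS m hm
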